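/- Let $G$ and $G'$ be finite abelian groups. If for every positive integer $n$ the number of elements of order $n$ in $G$ equals the number of elements of order $n$ in $G'$, then $G$ and $G'$ are isomorphic as groups. -/

import Mathlib

open Finset

lemma gcd_pp_same {r : ℕ} (k e : ℕ) : Nat.gcd (r ^ k) (r ^ e) = r ^ min k e := by
  rcases le_total k e with h | h
  · rw [min_eq_left h, Nat.gcd_eq_left (pow_dvd_pow r h)]
  · rw [min_eq_right h, Nat.gcd_eq_right (pow_dvd_pow r h)]

lemma gcd_pp_ne {r p : ℕ} (hr : r.Prime) (hp : p.Prime) (hne : p ≠ r) (k e : ℕ) :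
    Nat.gcd (r ^ k) (p ^ e) = 1 :=
  Nat.Coprime.pow _ _ ((Nat.coprime_primes hr hp).mpr (Ne.symm hne))

lemma card_torsion_zmod (n k : ℕ) (hn : n ≠ 0) :
    Nat.card {a : ZMod n // k • a = 0} = Nat.gcd k n := by
  haveI : NeZero n := ⟨hn⟩
  set f : ZMod n →+ ZMod n := AddMonoidHom.mk' (fun a => k • a) (fun a b => smul_add k a b) with hf
  have h1 : Nat.card (ZMod n) = Nat.card (ZMod n ⧸ f.ker) * Nat.card f.ker :=
    AddSubgroup.card_eq_card_quotient_mul_card_addSubgroup f.ker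
  have h2 : Nat.card (ZMod n ⧸ f.ker) = Nat.card f.range :=
    Nat.card_congr (QuotientAddGroup.quotientKerEquivRange f).toEquiv
  have hrange : (f.range : AddSubgroup (ZMod n)) = AddSubgroup.zmultiples ((k : ZMod n)) := by
    ext x
    constructor
    · rintro ⟨a, rfl⟩
      refine AddSubgroup.mem_zmultiples_iff.mpr ⟨(a.val : ℤ), ?_⟩
      show (a.val : ℤ) • ((k : ℕ) : ZMod n) = f a
      have : f a = k • a := rfl
      rw [this, zsmul_eq_mul, nsmul_eq_mul]
      push_cast
      rw [ZMod.natCast_val, ZMod.cast_id]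
      ring
    · intro hx
      obtain ⟨m, hm⟩ := AddSubgroup.mem_zmultiples_iff.mp hx
      refine ⟨((m : ZMod n)), ?_⟩
      show k • (m : ZMod n) = x
      rw [← hm, zsmul_eq_mul, nsmul_eq_mul]
      push_cast
      ring
  have h3 : Nat.card f.range = n / n.gcd k := by
    rw [hrange, Nat.card_zmultiples, ZMod.addOrderOf_coe k hn]
  have hcard : Nat.card (ZMod n) = n := Nat.card_zmod n
  have hk : Nat.card {a : ZMod n // k • a = 0} = Nat.card f.ker := by
    apply Nat.card_congr
    exact Equiv.subtypeEquivRight (fun a => by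
      simp [f, AddMonoidHom.mem_ker])
  rw [hk]
  have hq : (n / n.gcd k) * Nat.card f.ker = n := by
    rw [← h3, ← h2, ← h1, hcard]
  have hd : n.gcd k ∣ n := Nat.gcd_dvd_left n k
  have hq0 : 0 < n / n.gcd k :=
    Nat.div_pos (Nat.le_of_dvd (Nat.pos_of_ne_zero hn) hd)
      (Nat.gcd_pos_of_pos_left k (Nat.pos_of_ne_zero hn))
  have h4 : n / (n / n.gcd k) = Nat.card f.ker :=
    Nat.div_eq_of_eq_mul_right hq0 hq.symm
  rw [← h4, Nat.div_div_self hd hn, Nat.gcd_comm]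

lemma card_torsion_pi {ι : Type} [Fintype ι] (n : ι → ℕ) (hn : ∀ i, n i ≠ 0) (k : ℕ) :
    Nat.card {a : ∀ i, ZMod (n i) // k • a = 0} = ∏ i, Nat.gcd k (n i) := by
  have e : {a : ∀ i, ZMod (n i) // k • a = 0} ≃ ∀ i, {b : ZMod (n i) // k • b = 0} :=
    (Equiv.subtypeEquivRight (fun a => by
      simp [funext_iff])).trans (Equiv.subtypePiEquivPi)
  rw [Nat.card_congr e, Nat.card_pi]
  exact Finset.prod_congr rfl (fun i _ => card_torsion_zmod (n i) k (hn i))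

lemma decomp (G : Type*) [CommGroup G] [Finite G] :
    ∃ (ι : Type) (_ : Fintype ι) (p e : ι → ℕ), (∀ i, (p i).Prime) ∧
      Nonempty (Additive G ≃+ ∀ i, ZMod (p i ^ e i)) := by
  obtain ⟨ι, fι, p, hp, e, ⟨f⟩⟩ := AddCommGroup.equiv_directSum_zmod_of_finite (Additive G)
  exact ⟨ι, fι, p, e, hp, ⟨f.trans (DirectSum.addEquivProd _)⟩⟩

lemma card_pow_transfer {G : Type*} [CommGroup G] {ι : Type} [Fintype ι] (n : ι → ℕ)
    (f : Additive G ≃+ ∀ i, ZMod (n i)) (k : ℕ) :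
    Nat.card {x : G // x ^ k = 1} = Nat.card {a : ∀ i, ZMod (n i) // k • a = 0} := by
  apply Nat.card_congr
  refine (Equiv.subtypeEquiv (p := fun x => x ^ k = 1)
      (q := fun a : Additive G => k • a = 0) Additive.ofMul (fun x => ?_)).trans
    (Equiv.subtypeEquiv (q := fun a => k • a = 0) f.toEquiv (fun a => ?_))
  · show x ^ k = 1 ↔ k • Additive.ofMul x = 0
    rw [← ofMul_pow]
    exact ⟨fun h => by rw [h]; rfl, fun h => Additive.ofMul.injective (by rw [h]; rfl)⟩
  · show k • a = 0 ↔ k • (f a) = 0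
    constructor
    · intro h; rw [← map_nsmul, h, map_zero]
    · intro h
      have := congrArg f.symm h
      rwa [← map_nsmul, f.symm_apply_apply, map_zero] at this

lemma card_pow_eq_sum {G : Type*} [Group G] [Finite G] {k : ℕ} (hk : k ≠ 0) :
    Nat.card {x : G // x ^ k = 1}
      = ∑ m ∈ (Finset.range k.succ).filter (· ∣ k), Nat.card {x : G // orderOf x = m} := by
  classical
  cases nonempty_fintype G
  have h1 := sum_card_orderOf_eq_card_pow_eq_one (G := G) hk
  rw [Nat.card_eq_fintype_card, Fintype.card_subtype]
  rw [← h1]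
  exact Finset.sum_congr (by
      ext m; rw [Nat.mem_divisors, Finset.mem_filter, Finset.mem_range]
      exact ⟨fun hm => ⟨Nat.lt_succ_of_le (Nat.le_of_dvd (Nat.pos_of_ne_zero hk) hm.1), hm.1⟩,
        fun hm => ⟨hm.2, hk⟩⟩) fun m _ => by
    rw [Nat.card_eq_fintype_card, Fintype.card_subtype]

lemma card_pow_eq_of_card_orderOf_eq {G G' : Type*} [Group G] [Group G'] [Finite G] [Finite G']
    (h : ∀ n : ℕ, 0 < n → Nat.card {x : G // orderOf x = n} = Nat.card {x : G' // orderOf x = n})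
    (k : ℕ) (hk : k ≠ 0) :
    Nat.card {x : G // x ^ k = 1} = Nat.card {x : G' // x ^ k = 1} := by
  rw [card_pow_eq_sum hk, card_pow_eq_sum hk]
  apply Finset.sum_congr rfl
  intro m hm
  rcases Finset.mem_filter.mp hm with ⟨_, hd⟩
  rcases Nat.eq_zero_or_pos m with rfl | hpos
  · exact absurd (zero_dvd_iff.mp hd) hk
  · exact h m hpos

lemma prod_gcd_pp {ι : Type} [Fintype ι] (p e : ι → ℕ) (hp : ∀ i, (p i).Prime)
    {r : ℕ} (hr : r.Prime) (k : ℕ) :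
    ∏ i, Nat.gcd (r ^ k) (p i ^ e i)
      = r ^ ∑ i ∈ univ.filter (fun i => p i = r), min k (e i) := by
  classical
  rw [← Finset.prod_filter_mul_prod_filter_not univ (fun i => p i = r)]
  have h2 : ∏ i ∈ univ.filter (fun i => ¬ p i = r), Nat.gcd (r ^ k) (p i ^ e i) = 1 :=
    Finset.prod_eq_one (fun i hi =>
      gcd_pp_ne hr (hp i) ((Finset.mem_filter.mp hi).2) k (e i))
  have h1 : ∏ i ∈ univ.filter (fun i => p i = r), Nat.gcd (r ^ k) (p i ^ e i)
      = ∏ i ∈ univ.filter (fun i => p i = r), r ^ min k (e i) :=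
    Finset.prod_congr rfl (fun i hi => by
      rw [(Finset.mem_filter.mp hi).2]; exact gcd_pp_same k (e i))
  rw [h1, h2, mul_one, Finset.prod_pow_eq_pow_sum]

lemma fiber_count_eq {ι κ : Type} [Fintype ι] [Fintype κ]
    (p e : ι → ℕ) (hp : ∀ i, (p i).Prime) (q f : κ → ℕ) (hq : ∀ j, (q j).Prime)
    (H : ∀ k : ℕ, k ≠ 0 → ∏ i, Nat.gcd k (p i ^ e i) = ∏ j, Nat.gcd k (q j ^ f j))
    {r : ℕ} (hr : r.Prime) (m : ℕ) :
    (univ.filter (fun i => p i = r ∧ e i = m + 1)).card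
      = (univ.filter (fun j => q j = r ∧ f j = m + 1)).card := by
  classical
  have hS : ∀ k, ∑ i ∈ univ.filter (fun i => p i = r), min k (e i)
      = ∑ j ∈ univ.filter (fun j => q j = r), min k (f j) := by
    intro k
    have := H (r ^ k) (pow_ne_zero k hr.pos.ne')
    rw [prod_gcd_pp p e hp hr k, prod_gcd_pp q f hq hr k] at this
    exact Nat.pow_right_injective hr.two_le this
  have hrec : ∀ {α : Type} [Fintype α] (g h : α → ℕ) (k : ℕ),
      ∑ i ∈ univ.filter (fun i => g i = r), min (k+1) (h i)
        = (∑ i ∈ univ.filter (fun i => g i = r), min k (h i))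
          + (univ.filter (fun i => g i = r ∧ k + 1 ≤ h i)).card := by
    intro α _ g h k
    classical
    rw [Finset.card_filter]
    have : ∀ i ∈ univ.filter (fun i => g i = r),
        min (k+1) (h i) = min k (h i) + (if g i = r ∧ k + 1 ≤ h i then 1 else 0) := by
      intro i hi
      have hgi := (Finset.mem_filter.mp hi).2
      simp only [hgi, true_and]
      split_ifs <;> omega
    rw [Finset.sum_congr rfl this, Finset.sum_add_distrib]
    congr 1
    rw [Finset.sum_filter]
    apply Finset.sum_congr rfl
    intro i _
    split_ifs <;> simp_all
  have ha : ∀ k, (univ.filter (fun i => p i = r ∧ k + 1 ≤ e i)).card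
      = (univ.filter (fun j => q j = r ∧ k + 1 ≤ f j)).card := by
    intro k
    have h1 := hrec p e k
    have h2 := hrec q f k
    have h3 := hS (k+1)
    have h4 := hS k
    omega
  have hsplit : ∀ {α : Type} [Fintype α] (g h : α → ℕ),
      (univ.filter (fun i => g i = r ∧ m + 1 ≤ h i)).card
        = (univ.filter (fun i => g i = r ∧ h i = m + 1)).card
          + (univ.filter (fun i => g i = r ∧ m + 1 + 1 ≤ h i)).card := by
    intro α _ g h
    classical
    rw [Finset.card_filter, Finset.card_filter, Finset.card_filter, ← Finset.sum_add_distrib]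
    apply Finset.sum_congr rfl
    intro i _
    split_ifs <;> omega
  have h5 := ha m
  have h6 := ha (m+1)
  rw [hsplit p e, hsplit q f] at h5
  omega

lemma exists_equiv_of_fiber_card {ι κ : Type} [Fintype ι] [Fintype κ] (g : ι → ℕ) (h : κ → ℕ)
    (H : ∀ v, Nat.card {i // g i = v} = Nat.card {j // h j = v}) :
    ∃ σ : ι ≃ κ, ∀ i, h (σ i) = g i := by
  have E : ∀ v, {i // g i = v} ≃ {j // h j = v} := fun v =>
    (Finite.card_eq.mp (H v)).some
  refine ⟨(Equiv.sigmaFiberEquiv g).symm.trans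
    ((Equiv.sigmaCongrRight E).trans (Equiv.sigmaFiberEquiv h)), fun i => ?_⟩
  exact (E (g i) ⟨i, rfl⟩).2

lemma fiber_card_pp {ι κ : Type} [Fintype ι] [Fintype κ]
    (p e : ι → ℕ) (hp : ∀ i, (p i).Prime) (q f : κ → ℕ) (hq : ∀ j, (q j).Prime)
    (H : ∀ k : ℕ, k ≠ 0 → ∏ i, Nat.gcd k (p i ^ e i) = ∏ j, Nat.gcd k (q j ^ f j)) (v : ℕ) :
    Nat.card {i : {i : ι // e i ≠ 0} // p i.1 ^ e i.1 = v}
      = Nat.card {j : {j : κ // f j ≠ 0} // q j.1 ^ f j.1 = v} := by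
  classical
  have key : ∀ {α : Type} [Fintype α] (g h : α → ℕ),
      Nat.card {i : {i : α // h i ≠ 0} // g i.1 ^ h i.1 = v}
        = (univ.filter (fun i : α => h i ≠ 0 ∧ g i ^ h i = v)).card := by
    intro α _ g h
    have e1 := Nat.card_congr (Equiv.subtypeSubtypeEquivSubtypeInter
      (fun i : α => h i ≠ 0) (fun i : α => g i ^ h i = v))
    rw [e1, Nat.card_eq_fintype_card, Fintype.card_subtype]
  rw [key p e, key q f]
  by_cases hv : ∃ r m, Nat.Prime r ∧ v = r ^ (m + 1)
  · obtain ⟨r, m, hr, rfl⟩ := hv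
    have conv : ∀ {α : Type} (g h : α → ℕ), (∀ i, (g i).Prime) → ∀ i : α,
        (h i ≠ 0 ∧ g i ^ h i = r ^ (m + 1)) ↔ (g i = r ∧ h i = m + 1) := by
      intro α g h hg i
      constructor
      · rintro ⟨h0, heq⟩
        have hgr : g i = r := by
          have h1 : g i ∣ r ^ (m + 1) := heq ▸ dvd_pow_self (g i) h0
          exact (Nat.prime_dvd_prime_iff_eq (hg i) hr).mp ((hg i).dvd_of_dvd_pow h1)
        subst hgr
        exact ⟨rfl, Nat.pow_right_injective (hg i).two_le heq⟩
      · rintro ⟨h1, h2⟩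
        exact ⟨by omega, by rw [h1, h2]⟩
    rw [Finset.filter_congr (fun i _ => conv p e hp i),
      Finset.filter_congr (fun j _ => conv q f hq j)]
    have := fiber_count_eq p e hp q f hq H hr m
    convert this
  · have empty : ∀ {α : Type} [Fintype α] (g h : α → ℕ), (∀ i, (g i).Prime) →
        (univ.filter (fun i : α => h i ≠ 0 ∧ g i ^ h i = v)) = ∅ := by
      intro α _ g h hg
      rw [Finset.filter_eq_empty_iff]
      rintro i - ⟨h0, heq⟩
      exact hv ⟨g i, h i - 1, hg i, by rw [← heq]; congr 1; omega⟩
    rw [empty p e hp, empty q f hq]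
    simp



/-- Two finite abelian groups with the same number of elements of order `n`
for every positive integer `n` are isomorphic. -/
theorem stmt_8 (G G' : Type*) [CommGroup G] [Finite G] [CommGroup G'] [Finite G']
    (h : ∀ n : ℕ, 0 < n →
      Nat.card {x : G // orderOf x = n} = Nat.card {x : G' // orderOf x = n}) :
    Nonempty (G ≃* G') := by
  classical
  obtain ⟨ι, fι, p, e, hp, ⟨F⟩⟩ := decomp G
  obtain ⟨κ, fκ, q, f, hq, ⟨F'⟩⟩ := decomp G'
  have hn : ∀ i, p i ^ e i ≠ 0 := fun i => pow_ne_zero _ (hp i).pos.ne'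
  have hn' : ∀ j, q j ^ f j ≠ 0 := fun j => pow_ne_zero _ (hq j).pos.ne'
  have H : ∀ k : ℕ, k ≠ 0 → ∏ i, Nat.gcd k (p i ^ e i) = ∏ j, Nat.gcd k (q j ^ f j) := by
    intro k hk
    rw [← card_torsion_pi _ hn k, ← card_torsion_pi _ hn' k,
      ← card_pow_transfer _ F k, ← card_pow_transfer _ F' k]
    exact card_pow_eq_of_card_orderOf_eq (fun n hn => h n hn) k hk
  obtain ⟨σ, hσ⟩ := exists_equiv_of_fiber_card
      (fun i : {i : ι // e i ≠ 0} => p i.1 ^ e i.1)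
      (fun j : {j : κ // f j ≠ 0} => q j.1 ^ f j.1)
      (fiber_card_pp p e hp q f hq H)
  haveI u1 : ∀ i : {i : ι // ¬ e i ≠ 0}, Unique (ZMod (p i.1 ^ e i.1)) := fun i => by
    rw [show e i.1 = 0 from not_not.mp i.2, pow_zero]
    infer_instance
  haveI u2 : ∀ j : {j : κ // ¬ f j ≠ 0}, Unique (ZMod (q j.1 ^ f j.1)) := fun j => by
    rw [show f j.1 = 0 from not_not.mp j.2, pow_zero]
    infer_instance
  let E1 := (RingEquiv.piEquivPiSubtypeProd (fun i => e i ≠ 0)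
    (fun i : ι => ZMod (p i ^ e i))).toAddEquiv
  let E2 : ((i : {i : ι // e i ≠ 0}) → ZMod (p i.1 ^ e i.1))
      × ((i : {i : ι // ¬ e i ≠ 0}) → ZMod (p i.1 ^ e i.1))
      ≃+ ((i : {i : ι // e i ≠ 0}) → ZMod (p i.1 ^ e i.1)) := AddEquiv.prodUnique
  let E3 := (RingEquiv.piCongrRight (fun i : {i : ι // e i ≠ 0} =>
    ZMod.ringEquivCongr (hσ i).symm)).toAddEquiv
  let E4 := (RingEquiv.piCongrLeft (fun j : {j : κ // f j ≠ 0} =>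
    ZMod (q j.1 ^ f j.1)) σ).toAddEquiv
  let E1' := (RingEquiv.piEquivPiSubtypeProd (fun j => f j ≠ 0)
    (fun j : κ => ZMod (q j ^ f j))).toAddEquiv
  let E2' : ((j : {j : κ // f j ≠ 0}) → ZMod (q j.1 ^ f j.1))
      × ((j : {j : κ // ¬ f j ≠ 0}) → ZMod (q j.1 ^ f j.1))
      ≃+ ((j : {j : κ // f j ≠ 0}) → ZMod (q j.1 ^ f j.1)) := AddEquiv.prodUnique
  let total : Additive G ≃+ Additive G' :=
    F.trans (E1.trans (E2.trans (E3.trans (E4.trans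
      (E2'.symm.trans (E1'.symm.trans F'.symm))))))
  exact ⟨MulEquiv.toAdditive.symm total⟩
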